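/- Let p be a prime, s ∈ ℤ_{≥1}, a ∈ ℤ_p, and l ∈ {0,…,p−1} the unique integer with a + l ≡ 0 mod p. Then the reduction F̄(t) ∈ 𝔽_p[t] of F_{a,…,a}(t)_{<p} modulo p has degree exactly l and satisfies F̄(t) = (−1)^{ls} t^l F̄(t^{−1}); equivalently, ((a)_i/i!)^s ≡ (−1)^{ls} ((a)_j/j!)^s mod p whenever i + j = l with i, j ≥ 0, and ((a)_k/k!)^s ≡ 0 mod p for l < k ≤ p−1. -/

import Mathlib

open scoped Classical

namespace HGP

/-- `𝔽̄_p`, an algebraic closure of the prime field `𝔽_p`. -/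
abbrev Fbar (p : ℕ) [Fact p.Prime] : Type _ := AlgebraicClosure (ZMod p)

/-- `W = W(𝔽̄_p)`, the ring of Witt vectors of `𝔽̄_p`. -/
abbrev Wp (p : ℕ) [Fact p.Prime] : Type _ := WittVector p (Fbar p)

/-- `K = Frac W`. -/
abbrev Kp (p : ℕ) [Fact p.Prime] : Type _ := FractionRing (Wp p)

/-- The canonical embedding `ℤ_p = W(𝔽_p) → W(𝔽̄_p)`. -/
noncomputable def iota (p : ℕ) [Fact p.Prime] : ℤ_[p] →+* Wp p :=
  (WittVector.map (algebraMap (ZMod p) (Fbar p))).comp (WittVector.equiv p).symm.toRingHom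

/-- The canonical embedding `W → K`. -/
noncomputable def iotaK (p : ℕ) [Fact p.Prime] : Wp p →+* Kp p := algebraMap (Wp p) (Kp p)

/-- `l`: the unique integer in `{0,…,p−1}` with `a + l ≡ 0 mod p`. -/
noncomputable def dl (p : ℕ) [Fact p.Prime] (a : ℤ_[p]) : ℕ := (-a).appr 1

/-- `q := 4` if `p = 2` and `q := p` otherwise. -/
def qq (p : ℕ) : ℕ := if p = 2 then 4 else p

/-- `l′`: the unique integer in `{0,…,q−1}` with `a + l′ ≡ 0 mod q`. -/
noncomputable def dl' (p : ℕ) [Fact p.Prime] (a : ℤ_[p]) : ℕ :=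
  (-a).appr (if p = 2 then 2 else 1)

/-- `e := l′ − ⌊l′/p⌋`. -/
noncomputable def de (p : ℕ) [Fact p.Prime] (a : ℤ_[p]) : ℕ := dl' p a - dl' p a / p

/-- `a ∈ ℤ_p ∖ ℤ_{≤0}`, i.e. `a` is not a nonpositive rational integer. -/
def NotNonposInt (p : ℕ) [Fact p.Prime] (a : ℤ_[p]) : Prop := ∀ n : ℕ, a + (n : ℤ_[p]) ≠ 0

/-- `a′` is the Dwork prime of `a`, i.e. `p·a′ = a + l`. -/
def IsDworkPrime (p : ℕ) [Fact p.Prime] (a a' : ℤ_[p]) : Prop :=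
  (p : ℤ_[p]) * a' = a + (dl p a : ℤ_[p])

/-- `A k = ((a)_k / k!)^s ∈ ℤ_p`, characterized by `k!^s · A k = ((a)_k)^s`. -/
def IsHGCoeff (p : ℕ) [Fact p.Prime] (s : ℕ) (a : ℤ_[p]) (A : ℕ → ℤ_[p]) : Prop :=
  ∀ k : ℕ, (k.factorial : ℤ_[p]) ^ s * A k = ((ascPochhammer ℤ_[p] k).eval a) ^ s

/-- `f = (α ↦ c^α)` for `c ∈ 1 + pW`: `c^α` is uniquely characterized by
`c^α ≡ c^{α_n} mod p^n W` for any natural approximation `α_n` of `α` mod `p^n`. -/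
def IsCpow (p : ℕ) [Fact p.Prime] (c : Wp p) (f : ℤ_[p] → Wp p) : Prop :=
  ∀ (α : ℤ_[p]) (n : ℕ), f α - c ^ (α.appr n) ∈ Ideal.span {(p : Wp p) ^ n}

/-- The coefficients `B_k` of `Ĝ^{(σ)}_{a,…,a}(t)`, as elements of `K = Frac W`:
`B_k = (k+a)⁻¹ (A_k − (−1)^{se} A^{(1)}_{(k−l)/p} c^{(k−l)/p + a′})`. -/
noncomputable def BhatK (p : ℕ) [Fact p.Prime] (s : ℕ) (a a' : ℤ_[p]) (A A1 : ℕ → ℤ_[p])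
    (cpw : ℤ_[p] → Wp p) (k : ℕ) : Kp p :=
  ((k : Kp p) + iotaK p (iota p a))⁻¹ *
    (iotaK p (iota p (A k)) -
      (if dl p a ≤ k ∧ p ∣ (k - dl p a) then
        (-1 : Kp p) ^ (s * de p a) * iotaK p (iota p (A1 ((k - dl p a) / p))) *
          iotaK p (cpw ((((k - dl p a) / p : ℕ) : ℤ_[p]) + a'))
      else 0))

/-- `B : ℕ → W` is the coefficient function of `Ĝ^{(σ)}_{a,…,a}(t)`, characterized in `W` by
`(k+a)·B_k = A_k − (−1)^{se} A^{(1)}_{(k−l)/p} c^{(k−l)/p + a′}`. -/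
def IsBhat (p : ℕ) [Fact p.Prime] (s : ℕ) (a a' : ℤ_[p]) (A A1 : ℕ → ℤ_[p])
    (cpw : ℤ_[p] → Wp p) (B : ℕ → Wp p) : Prop :=
  ∀ k : ℕ, ((k : Wp p) + iota p a) * B k =
    iota p (A k) -
      (if dl p a ≤ k ∧ p ∣ (k - dl p a) then
        (-1 : Wp p) ^ (s * de p a) * iota p (A1 ((k - dl p a) / p)) *
          cpw ((((k - dl p a) / p : ℕ) : ℤ_[p]) + a')
      else 0)

/-- A function `ℕ → K` is Lipschitz: it takes values in `W` and
`p^m ∣ (n − n′)` implies `f n − f n′ ∈ p^m W`. -/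
def LipschitzSeq (p : ℕ) [Fact p.Prime] (f : ℕ → Kp p) : Prop :=
  (∀ n : ℕ, f n ∈ (iotaK p).range) ∧
    ∀ n n' m : ℕ, ((p : ℤ) ^ m ∣ (n : ℤ) - (n' : ℤ)) →
      ∃ w : Wp p, f n - f n' = (p : Kp p) ^ m * iotaK p w

/-- `L` is the `p`-adic limit of the sequence `s` in `W`. -/
def WLim (p : ℕ) [Fact p.Prime] (s : ℕ → Wp p) (L : Wp p) : Prop :=
  ∀ m : ℕ, ∃ M : ℕ, ∀ n ≥ M, L - s n ∈ Ideal.span {(p : Wp p) ^ m}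

/-- `{α}_k := Π_{1 ≤ i ≤ k, p ∤ (α+i−1)} (α+i−1)`. -/
noncomputable def curly (p : ℕ) [Fact p.Prime] (α : ℤ_[p]) (k : ℕ) : ℤ_[p] :=
  ∏ j ∈ Finset.range k, if (p : ℤ_[p]) ∣ (α + (j : ℤ_[p])) then 1 else (α + (j : ℤ_[p]))

/-- `W/p^n W`. -/
abbrev Qn (p : ℕ) [Fact p.Prime] (n : ℕ) := Wp p ⧸ Ideal.span {(p : Wp p) ^ n}

/-- Laurent polynomials over `W/p^n`, obtained from polynomials over `W`. -/
noncomputable def laurentOfPolyW (p : ℕ) [Fact p.Prime] (n : ℕ) :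
    Polynomial (Wp p) →+* LaurentPolynomial (Qn p n) :=
  (Polynomial.toLaurent).comp
    (Polynomial.mapRingHom (Ideal.Quotient.mk (Ideal.span {(p : Wp p) ^ n})))

/-- `R_n := (W/p^n)[t,t⁻¹, h(t)⁻¹]`, the localization of the Laurent polynomial ring
over `W/p^n` away from (the image of) `h`. -/
abbrev Rn (p : ℕ) [Fact p.Prime] (h : Polynomial (Wp p)) (n : ℕ) :=
  Localization.Away (laurentOfPolyW p n h)

/-- The canonical map from Laurent polynomials over `W/p^n` to `R_n`. -/
noncomputable def mkRn (p : ℕ) [Fact p.Prime] (h : Polynomial (Wp p)) (n : ℕ) :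
    LaurentPolynomial (Qn p n) →+* Rn p h n := algebraMap _ _

/-- The canonical map from polynomials over `W` to `R_n`. -/
noncomputable def toRn (p : ℕ) [Fact p.Prime] (h : Polynomial (Wp p)) (n : ℕ) :
    Polynomial (Wp p) →+* Rn p h n := (mkRn p h n).comp (laurentOfPolyW p n)


/-- the reduction mod `p` of `F_{a,…,a}(t)_{<p}` has degree `l` and equals its
own reversal up to the sign `(−1)^{ls}`; explicitly, `((a)_i/i!)^s ≡ (−1)^{ls} ((a)_j/j!)^s
mod p` whenever `i + j = l`, and `((a)_k/k!)^s ≡ 0 mod p` for `l < k ≤ p−1`. -/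
theorem statement15 (p : ℕ) [Fact p.Prime] (s : ℕ) (hs : 1 ≤ s)
    (a : ℤ_[p]) (A : ℕ → ℤ_[p]) (hA : IsHGCoeff p s a A) :
    (∀ i j : ℕ, i + j = dl p a →
      A i - (-1 : ℤ_[p]) ^ (dl p a * s) * A j ∈ Ideal.span {(p : ℤ_[p])}) ∧
    (∀ k : ℕ, dl p a < k → k ≤ p - 1 → A k ∈ Ideal.span {(p : ℤ_[p])}) := by
  have hp := (Fact.out : p.Prime)
  set l := dl p a with hl
  -- membership criterion
  have hmem : ∀ x : ℤ_[p], x ∈ Ideal.span {(p : ℤ_[p])} ↔ PadicInt.toZMod x = 0 := by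
    intro x
    rw [← PadicInt.maximalIdeal_eq_span_p, ← PadicInt.ker_toZMod, RingHom.mem_ker]
  -- b = image of a, equals -l
  have hb : PadicInt.toZMod a = -(l : ZMod p) := by
    have h1 : (-a) - ((-a).appr 1 : ℤ_[p]) ∈ Ideal.span {(p : ℤ_[p]) ^ 1} :=
      PadicInt.appr_spec 1 (-a)
    rw [pow_one] at h1
    have := (hmem _).mp h1
    rw [map_sub, map_neg, map_natCast, sub_eq_zero] at this
    rw [hl, dl]
    rw [eq_comm, neg_eq_iff_eq_neg, ← this]
  have hlp : l < p := by rw [hl, dl]; simpa using PadicInt.appr_lt (-a) 1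
  -- image of Pochhammer eval
  have hpoch : ∀ k : ℕ, PadicInt.toZMod ((ascPochhammer ℤ_[p] k).eval a)
      = (ascPochhammer (ZMod p) k).eval (PadicInt.toZMod a) := by
    intro k
    rw [ascPochhammer_eval₂ (PadicInt.toZMod : ℤ_[p] →+* ZMod p) k,
      Polynomial.eval₂_at_apply]
  -- image of the defining equation
  have hAk : ∀ k : ℕ, ((k.factorial : ZMod p)) ^ s * PadicInt.toZMod (A k)
      = ((ascPochhammer (ZMod p) k).eval (-(l : ZMod p))) ^ s := by
    intro k
    have := congrArg PadicInt.toZMod (hA k)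
    rw [map_mul, map_pow, map_pow, map_natCast, hpoch, hb] at this
    exact this
  have hfact_ne : ∀ k : ℕ, k < p → ((k.factorial : ZMod p)) ≠ 0 := by
    intro k hk h
    rw [ZMod.natCast_eq_zero_iff] at h
    exact absurd (hp.dvd_factorial.mp h) (not_le.mpr hk)
  constructor
  · intro i j hij
    have hi : i < p := lt_of_le_of_lt (hij ▸ Nat.le_add_right i j) hlp
    have hj : j < p := lt_of_le_of_lt (hij ▸ Nat.le_add_left j i) hlp
    rw [hmem, map_sub, map_mul, map_pow, map_neg, map_one]
    -- key evals
    have key : ∀ m n : ℕ, m + n = l →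
        ((m.factorial : ZMod p) * n.factorial) ^ s * PadicInt.toZMod (A m)
          = ((-1 : ZMod p)) ^ (m * s) * (l.factorial : ZMod p) ^ s := by
      intro m n hmn
      have hev : (ascPochhammer (ZMod p) m).eval (-(l : ZMod p))
          = (-1 : ZMod p) ^ m * (l.descFactorial m : ZMod p) := by
        rw [ascPochhammer_eval_neg_eq_descPochhammer,
          descPochhammer_eval_eq_descFactorial]
      have hfac : (n.factorial : ZMod p) * (l.descFactorial m : ZMod p)
          = (l.factorial : ZMod p) := by
        have hml : m ≤ l := hmn ▸ Nat.le_add_right m n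
        have : (l - m).factorial * l.descFactorial m = l.factorial :=
          Nat.factorial_mul_descFactorial hml
        have hnl : l - m = n := by omega
        rw [hnl] at this
        rw [← Nat.cast_mul, this]
      calc ((m.factorial : ZMod p) * n.factorial) ^ s * PadicInt.toZMod (A m)
          = (n.factorial : ZMod p) ^ s * ((m.factorial : ZMod p) ^ s * PadicInt.toZMod (A m)) := by
            ring
        _ = (n.factorial : ZMod p) ^ s * ((-1 : ZMod p) ^ m * (l.descFactorial m : ZMod p)) ^ s := by
            rw [hAk, hev]
        _ = (-1 : ZMod p) ^ (m * s) * ((n.factorial : ZMod p) * (l.descFactorial m : ZMod p)) ^ s := by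
            rw [mul_pow, mul_pow, pow_mul]; ring
        _ = (-1 : ZMod p) ^ (m * s) * (l.factorial : ZMod p) ^ s := by rw [hfac]
    have hji : j + i = l := by omega
    have k1 := key i j hij
    have k2 := key j i hji
    have hC : ((i.factorial : ZMod p) * j.factorial) ^ s ≠ 0 :=
      pow_ne_zero _ (mul_ne_zero (hfact_ne i hi) (hfact_ne j hj))
    have hsign : ((-1 : ZMod p)) ^ (l * s) * (-1 : ZMod p) ^ (j * s)
        = (-1 : ZMod p) ^ (i * s) := by
      have hls : l * s + j * s = i * s + 2 * (j * s) := by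
        have : l * s = i * s + j * s := by rw [← hij, add_mul]
        omega
      have he : ((-1 : ZMod p)) ^ (2 * (j * s)) = 1 := Even.neg_one_pow ⟨j * s, by ring⟩
      rw [← pow_add, hls, pow_add, he, mul_one]
    have : ((i.factorial : ZMod p) * j.factorial) ^ s *
        (PadicInt.toZMod (A i) - (-1 : ZMod p) ^ (l * s) * PadicInt.toZMod (A j)) = 0 := by
      rw [mul_sub, k1]
      have : ((i.factorial : ZMod p) * j.factorial) ^ s *
          ((-1 : ZMod p) ^ (l * s) * PadicInt.toZMod (A j))
          = (-1 : ZMod p) ^ (l * s) * (((j.factorial : ZMod p) * i.factorial) ^ s *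
            PadicInt.toZMod (A j)) := by ring
      rw [this, k2, ← mul_assoc, hsign, sub_self]
    have := (mul_eq_zero.mp this).resolve_left hC
    rw [sub_eq_zero] at this ⊢
    rw [this]
  · intro k hkl hk
    rw [hmem]
    have hkp : k < p := by omega
    have : (ascPochhammer (ZMod p) k).eval (-(l : ZMod p)) = 0 := by
      rw [ascPochhammer_eval_neg_eq_descPochhammer,
        descPochhammer_eval_eq_descFactorial,
        Nat.descFactorial_eq_zero_iff_lt.mpr hkl, Nat.cast_zero, mul_zero]
    have h0 := hAk k
    rw [this, zero_pow (by omega : s ≠ 0)] at h0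
    exact (mul_eq_zero.mp h0).resolve_left (pow_ne_zero _ (hfact_ne k hkp))

end HGP
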